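/- Let K ≥ 1, σ² > 0, and let A and C be K×K complex Hermitian positive semidefinite matrices with eigenvalues λ₁(A) ≥ … ≥ λ_K(A) and λ₁(C) ≥ … ≥ λ_K(C) listed in decreasing order. Then det(σ²·I + A + C) / det(σ²·I + C) ≥ ∏_{i=1}^K (1 + λ_i(A)/(σ² + λ_i(C))); equivalently, log₂ det(σ²I + A + C) − log₂ det(σ²I + C) ≥ Σ_{i=1}^K log₂(1 + λ_i(A)/(σ² + λ_i(C))). -/

import Mathlib

open Matrix BigOperators ComplexOrder

open Finset in
/-- The "first `k` indices" subset of `Fin K`. -/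
def Fk (K k : ℕ) : Finset (Fin K) := Finset.univ.filter (fun i => (i : ℕ) < k)

open Finset in
lemma sum_Fk_eq {M : Type*} [AddCommMonoid M] {K k : ℕ} (hk : k ≤ K) (g : Fin K → M) :
    ∑ i ∈ Fk K k, g i = ∑ n ∈ Finset.range k, (if h : n < K then g ⟨n, h⟩ else 0) := by
  classical
  set g' : ℕ → M := fun n => if h : n < K then g ⟨n, h⟩ else 0 with hg'
  have hg : ∀ i : Fin K, g i = g' (i : ℕ) := fun i => by simp [hg', i.isLt]
  calc ∑ i ∈ Fk K k, g i = ∑ i ∈ Fk K k, g' (i : ℕ) := Finset.sum_congr rfl (fun i _ => hg i)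
    _ = ∑ i : Fin K, (fun n => if n < k then g' n else 0) (i : ℕ) := by
        rw [Fk, Finset.sum_filter]
    _ = ∑ n ∈ Finset.range K, (if n < k then g' n else 0) :=
        Fin.sum_univ_eq_sum_range (fun n => if n < k then g' n else 0) K
    _ = ∑ n ∈ (Finset.range K).filter (· < k), g' n := (Finset.sum_filter _ _).symm
    _ = ∑ n ∈ Finset.range k, g' n := by
        congr 1
        ext n
        simp only [Finset.mem_filter, Finset.mem_range]
        omega

lemma Fk_univ (K : ℕ) : Fk K K = Finset.univ := by
  ext i; simp [Fk, i.isLt]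

lemma card_Fk {K k : ℕ} (hk : k ≤ K) : (Fk K k).card = k := by
  classical
  rw [Finset.card_eq_sum_ones, sum_Fk_eq hk (fun _ => (1 : ℕ))]
  have : ∀ n ∈ Finset.range k, (if h : n < K then (1 : ℕ) else 0) = 1 := by
    intro n hn
    have : n < K := lt_of_lt_of_le (Finset.mem_range.1 hn) hk
    simp [this]
  rw [Finset.sum_congr rfl this]
  simp

/-- Sub-stochastic weights lemma: if `0 ≤ w ≤ 1`, `∑ w = k` and `μ` is a nonnegative
antitone sequence, then `∑ μ i * w i ≤ ∑_{i < k} μ i`. -/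
lemma substoch {K k : ℕ} (hk : k ≤ K) (μ w : Fin K → ℝ) (hμ : Antitone μ)
    (hμ0 : ∀ i, 0 ≤ μ i) (hw0 : ∀ i, 0 ≤ w i) (hw1 : ∀ i, w i ≤ 1)
    (hws : ∑ i, w i = (k : ℝ)) :
    ∑ i, μ i * w i ≤ ∑ i ∈ Fk K k, μ i := by
  classical
  set c : ℝ := if h : k < K then μ ⟨k, h⟩ else 0 with hc
  have hcμ : ∀ i : Fin K, (i : ℕ) < k → c ≤ μ i := by
    intro i hi
    by_cases h : k < K
    · rw [hc, dif_pos h]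
      exact hμ (by simp [Fin.le_def]; omega)
    · rw [hc, dif_neg h]; exact hμ0 i
  have hμc : ∀ i : Fin K, ¬ (i : ℕ) < k → μ i ≤ c := by
    intro i hi
    have h : k < K := lt_of_le_of_lt (not_lt.1 hi) i.isLt
    rw [hc, dif_pos h]
    exact hμ (by simp [Fin.le_def]; omega)
  have hsplitw : ∑ i ∈ Fk K k, w i + ∑ i ∈ Finset.univ.filter (fun i : Fin K => ¬ (i : ℕ) < k), w i
      = (k : ℝ) := by
    rw [Fk, Finset.sum_filter_add_sum_filter_not, hws]
  have hFone : ∑ i ∈ Fk K k, (1 : ℝ) = (k : ℝ) := by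
    rw [Finset.sum_const, card_Fk hk]; simp
  have h1 : ∑ i ∈ Fk K k, μ i * w i ≤ ∑ i ∈ Fk K k, (μ i + c * (w i - 1)) := by
    apply Finset.sum_le_sum
    intro i hi
    have hik : (i : ℕ) < k := by simpa [Fk] using hi
    nlinarith [hcμ i hik, hw1 i]
  have h2 : ∑ i ∈ Finset.univ.filter (fun i : Fin K => ¬ (i : ℕ) < k), μ i * w i
      ≤ ∑ i ∈ Finset.univ.filter (fun i : Fin K => ¬ (i : ℕ) < k), c * w i := by
    apply Finset.sum_le_sum
    intro i hi
    have hik : ¬ (i : ℕ) < k := by simpa using (Finset.mem_filter.1 hi).2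
    exact mul_le_mul_of_nonneg_right (hμc i hik) (hw0 i)
  have hsplit : ∑ i, μ i * w i = ∑ i ∈ Fk K k, μ i * w i +
      ∑ i ∈ Finset.univ.filter (fun i : Fin K => ¬ (i : ℕ) < k), μ i * w i := by
    rw [Fk, Finset.sum_filter_add_sum_filter_not]
  have hexp : ∑ i ∈ Fk K k, (μ i + c * (w i - 1)) =
      ∑ i ∈ Fk K k, μ i + c * ∑ i ∈ Fk K k, w i - c * (k : ℝ) := by
    rw [Finset.sum_add_distrib]
    rw [show ∑ i ∈ Fk K k, c * (w i - 1) = c * ∑ i ∈ Fk K k, (w i - 1) from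
      (Finset.mul_sum _ _ _).symm]
    rw [Finset.sum_sub_distrib, hFone]
    ring
  have hcsum : ∑ i ∈ Finset.univ.filter (fun i : Fin K => ¬ (i : ℕ) < k), c * w i
      = c * ∑ i ∈ Finset.univ.filter (fun i : Fin K => ¬ (i : ℕ) < k), w i :=
    (Finset.mul_sum _ _ _).symm
  have hc2 : c * (∑ i ∈ Fk K k, w i) + c * (∑ i ∈ Finset.univ.filter
      (fun i : Fin K => ¬ (i : ℕ) < k), w i) = c * (k : ℝ) := by
    rw [← mul_add, hsplitw]
  linarith [h1, h2]

/-- Abel-summation auxiliary inequality. -/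
lemma abel_aux (d t : ℕ → ℝ) (hd : Monotone d) :
    ∀ n D, (∀ i, i < n → d i ≤ D) → (∀ k, k ≤ n → ∑ i ∈ Finset.range k, t i ≤ 0) →
      D * (∑ i ∈ Finset.range n, t i) ≤ ∑ i ∈ Finset.range n, d i * t i := by
  intro n
  induction n with
  | zero => intro D _ _; simp
  | succ n ih =>
    intro D hD hT
    have h1 := ih (d n) (fun i hi => hd hi.le) (fun k hk => hT k (hk.trans n.le_succ))
    have h2 := hT (n + 1) le_rfl
    have h3 : d n ≤ D := hD n (Nat.lt_succ_self n)
    rw [Finset.sum_range_succ t] at h2 ⊢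
    rw [Finset.sum_range_succ (fun i => d i * t i)]
    nlinarith [h1, h2, h3]

/-- Karamata-type inequality for `∏ (s + ·)` under weak majorization with equal sums. -/
lemma karamata_prod {K : ℕ} (s : ℝ) (hs : 0 < s) (x y : Fin K → ℝ) (hx : Antitone x)
    (hx0 : ∀ i, 0 ≤ x i) (hy0 : ∀ i, 0 ≤ y i)
    (hpart : ∀ k, k ≤ K → ∑ i ∈ Fk K k, x i ≤ ∑ i ∈ Fk K k, y i)
    (htot : ∑ i, x i = ∑ i, y i) :
    ∏ i, (s + y i) ≤ ∏ i, (s + x i) := by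
  classical
  have hxpos : ∀ i, 0 < s + x i := fun i => by linarith [hx0 i]
  have hypos : ∀ i, 0 < s + y i := fun i => by linarith [hy0 i]
  set d : ℕ → ℝ := fun n => if h : n < K then 1 / (s + x ⟨n, h⟩) else 1 / s with hd_def
  set t : ℕ → ℝ := fun n => if h : n < K then x ⟨n, h⟩ - y ⟨n, h⟩ else 0 with ht_def
  have hdmono : Monotone d := by
    intro i j hij
    by_cases hi : i < K
    · by_cases hj : j < K
      · simp only [hd_def, dif_pos hi, dif_pos hj]
        apply one_div_le_one_div_of_le (hxpos _)
        have hxle : x ⟨j, hj⟩ ≤ x ⟨i, hi⟩ := hx (by simp [Fin.le_def]; omega)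
        linarith
      · simp only [hd_def, dif_pos hi, dif_neg hj]
        apply one_div_le_one_div_of_le hs
        linarith [hx0 ⟨i, hi⟩]
    · have hj : ¬ j < K := fun hjk => hi (lt_of_le_of_lt hij hjk)
      simp [hd_def, dif_neg hi, dif_neg hj]
  have hTr : ∀ k, k ≤ K → ∑ n ∈ Finset.range k, t n =
      ∑ i ∈ Fk K k, x i - ∑ i ∈ Fk K k, y i := by
    intro k hk
    rw [sum_Fk_eq hk x, sum_Fk_eq hk y, ← Finset.sum_sub_distrib]
    apply Finset.sum_congr rfl
    intro n hn
    have hnK : n < K := lt_of_lt_of_le (Finset.mem_range.1 hn) hk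
    simp [ht_def, hnK]
  have hT : ∀ k, k ≤ K → ∑ n ∈ Finset.range k, t n ≤ 0 := by
    intro k hk
    rw [hTr k hk]
    linarith [hpart k hk]
  have hTK : ∑ n ∈ Finset.range K, t n = 0 := by
    rw [hTr K le_rfl, Fk_univ]
    simp [htot]
  have hDbound : ∀ i, i < K → d i ≤ 1 / s := by
    intro i hi
    simp only [hd_def, dif_pos hi]
    apply one_div_le_one_div_of_le hs
    linarith [hx0 ⟨i, hi⟩]
  have habel := abel_aux d t hdmono K (1 / s) hDbound hT
  rw [hTK, mul_zero] at habel
  have hsum_dt : ∑ n ∈ Finset.range K, d n * t n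
      = ∑ i : Fin K, (1 / (s + x i)) * (x i - y i) := by
    rw [← Fin.sum_univ_eq_sum_range (fun n => d n * t n) K]
    apply Finset.sum_congr rfl
    intro i _
    simp [hd_def, ht_def, i.isLt]
  have hlog : ∑ i, Real.log (s + y i) ≤ ∑ i, Real.log (s + x i) := by
    have key : ∀ i : Fin K, Real.log (s + y i) - Real.log (s + x i)
        ≤ (y i - x i) / (s + x i) := by
      intro i
      have h := Real.log_le_sub_one_of_pos (div_pos (hypos i) (hxpos i))
      rw [Real.log_div (ne_of_gt (hypos i)) (ne_of_gt (hxpos i))] at h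
      have heq : (s + y i) / (s + x i) - 1 = (y i - x i) / (s + x i) := by
        rw [div_sub_one (ne_of_gt (hxpos i))]
        ring_nf
      linarith [h, heq.le, heq.ge]
    have hsumkey : ∑ i, (Real.log (s + y i) - Real.log (s + x i))
        ≤ ∑ i, (y i - x i) / (s + x i) := Finset.sum_le_sum (fun i _ => key i)
    have hswap : ∑ i, (y i - x i) / (s + x i)
        = - ∑ i : Fin K, (1 / (s + x i)) * (x i - y i) := by
      rw [← Finset.sum_neg_distrib]
      apply Finset.sum_congr rfl
      intro i _
      field_simp
      ring
    rw [Finset.sum_sub_distrib] at hsumkey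
    rw [hswap, ← hsum_dt] at hsumkey
    linarith [habel, hsumkey]
  calc ∏ i, (s + y i) = Real.exp (∑ i, Real.log (s + y i)) := by
        rw [Real.exp_sum]
        exact Finset.prod_congr rfl fun i _ => (Real.exp_log (hypos i)).symm
    _ ≤ Real.exp (∑ i, Real.log (s + x i)) := Real.exp_le_exp.2 hlog
    _ = ∏ i, (s + x i) := by
        rw [Real.exp_sum]
        exact Finset.prod_congr rfl fun i _ => Real.exp_log (hxpos i)

lemma rcl_ofReal (r : ℝ) : (RCLike.ofReal r : ℂ) = (r : ℂ) := rfl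

/-- Ky Fan-type bound: a sum of `|S|` diagonal entries of a unitary conjugate of a PSD
matrix is at most the sum of its `|S|` largest eigenvalues. -/
lemma kyfan {K : ℕ} {B : Matrix (Fin K) (Fin K) ℂ} (hB : B.PosSemidef)
    (lam : Fin K → ℝ) (hlam : Antitone lam) (e : Equiv.Perm (Fin K))
    (he : lam = hB.isHermitian.eigenvalues ∘ e)
    (W : Matrix (Fin K) (Fin K) ℂ) (hW : W ∈ Matrix.unitaryGroup (Fin K) ℂ)
    (S : Finset (Fin K)) :
    ∑ j ∈ S, ((star W * B * W) j j).re ≤ ∑ i ∈ Fk K S.card, lam i := by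
  classical
  set U : Matrix (Fin K) (Fin K) ℂ := (hB.isHermitian.eigenvectorUnitary : Matrix (Fin K) (Fin K) ℂ) with hUdef
  set M : Matrix (Fin K) (Fin K) ℂ := star W * U with hMdef
  have hMmem : M ∈ Matrix.unitaryGroup (Fin K) ℂ :=
    mul_mem (Unitary.star_mem hW) hB.isHermitian.eigenvectorUnitary.2
  have hM1 : star M * M = 1 := Matrix.mem_unitaryGroup_iff'.mp hMmem
  have hM2 : M * star M = 1 := Matrix.mem_unitaryGroup_iff.mp hMmem
  set eig : Fin K → ℝ := hB.isHermitian.eigenvalues with heig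
  have hdiag : star W * B * W
      = M * Matrix.diagonal (RCLike.ofReal ∘ eig) * star M := by
    conv_lhs => rw [hB.isHermitian.spectral_theorem, Unitary.conjStarAlgAut_apply]
    rw [show star M = star U * W from by rw [hMdef, StarMul.star_mul, star_star]]
    simp only [Matrix.mul_assoc, hMdef, ← hUdef, ← heig]
  have hentry : ∀ j, ((star W * B * W) j j).re
      = ∑ l, eig l * Complex.normSq (M j l) := by
    intro j
    have h1 : (star W * B * W) j j
        = ((∑ l, eig l * Complex.normSq (M j l) : ℝ) : ℂ) := by
      rw [hdiag, Matrix.mul_apply]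
      push_cast
      apply Finset.sum_congr rfl
      intro l _
      rw [Matrix.mul_diagonal, Matrix.star_apply]
      have : (M j l) * star (M j l) = (Complex.normSq (M j l) : ℂ) := Complex.mul_conj _
      calc M j l * (RCLike.ofReal ∘ eig) l * star (M j l)
          = ((eig l : ℂ)) * (M j l * star (M j l)) := by
            simp only [Function.comp_apply, rcl_ofReal]
            ring
        _ = (eig l : ℂ) * (Complex.normSq (M j l) : ℂ) := by rw [this]
    rw [h1, Complex.ofReal_re]
  have hcol : ∀ l, ∑ j, Complex.normSq (M j l) = 1 := by
    intro l
    have h := congrFun (congrFun hM1 l) l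
    rw [Matrix.mul_apply] at h
    rw [show (1 : Matrix (Fin K) (Fin K) ℂ) l l = 1 from Matrix.one_apply_eq l] at h
    have h2 : ∑ j, ((Complex.normSq (M j l) : ℂ)) = 1 := by
      rw [← h]
      apply Finset.sum_congr rfl
      intro j _
      rw [Matrix.star_apply, Complex.star_def, mul_comm]
      exact (Complex.mul_conj _).symm
    have h3 : ((∑ j, Complex.normSq (M j l) : ℝ) : ℂ) = ((1 : ℝ) : ℂ) := by
      push_cast
      simpa using h2
    exact_mod_cast h3
  have hrow : ∀ j, ∑ l, Complex.normSq (M j l) = 1 := by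
    intro j
    have h := congrFun (congrFun hM2 j) j
    rw [Matrix.mul_apply] at h
    rw [show (1 : Matrix (Fin K) (Fin K) ℂ) j j = 1 from Matrix.one_apply_eq j] at h
    have h2 : ∑ l, ((Complex.normSq (M j l) : ℂ)) = 1 := by
      rw [← h]
      apply Finset.sum_congr rfl
      intro l _
      rw [Matrix.star_apply, Complex.star_def]
      exact (Complex.mul_conj _).symm
    have h3 : ((∑ l, Complex.normSq (M j l) : ℝ) : ℂ) = ((1 : ℝ) : ℂ) := by
      push_cast
      simpa using h2
    exact_mod_cast h3
  set w : Fin K → ℝ := fun l => ∑ j ∈ S, Complex.normSq (M j l) with hwdef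
  have hw0 : ∀ l, 0 ≤ w l := fun l =>
    Finset.sum_nonneg fun j _ => Complex.normSq_nonneg _
  have hw1 : ∀ l, w l ≤ 1 := by
    intro l
    calc w l ≤ ∑ j, Complex.normSq (M j l) :=
          Finset.sum_le_sum_of_subset_of_nonneg (Finset.subset_univ S)
            (fun j _ _ => Complex.normSq_nonneg _)
      _ = 1 := hcol l
  have hws : ∑ l, w l = (S.card : ℝ) := by
    rw [hwdef]
    rw [Finset.sum_comm]
    rw [Finset.sum_congr rfl (fun j (_ : j ∈ S) => hrow j)]
    simp
  have hmain : ∑ j ∈ S, ((star W * B * W) j j).re = ∑ i, lam i * w (e i) := by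
    calc ∑ j ∈ S, ((star W * B * W) j j).re
        = ∑ j ∈ S, ∑ l, eig l * Complex.normSq (M j l) :=
          Finset.sum_congr rfl fun j _ => hentry j
      _ = ∑ l, eig l * w l := by
          rw [Finset.sum_comm]
          apply Finset.sum_congr rfl
          intro l _
          rw [hwdef, Finset.mul_sum]
      _ = ∑ i, eig (e i) * w (e i) := (Equiv.sum_comp e (fun l => eig l * w l)).symm
      _ = ∑ i, lam i * w (e i) := by
          apply Finset.sum_congr rfl
          intro i _
          rw [he]
          rfl
  have hlam0 : ∀ i, 0 ≤ lam i := by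
    intro i
    rw [he]
    exact hB.eigenvalues_nonneg (e i)
  have hcard : S.card ≤ K := by
    have := Finset.card_le_univ S
    simpa using this
  rw [hmain]
  exact substoch hcard lam (fun i => w (e i)) hlam hlam0 (fun i => hw0 _) (fun i => hw1 _)
    (by rw [Equiv.sum_comp e w]; exact hws)

/-- Determinant of `s•1 + B` for Hermitian `B` is the product of shifted eigenvalues. -/
lemma det_shift {K : ℕ} {B : Matrix (Fin K) (Fin K) ℂ} (hB : B.IsHermitian) (s : ℝ) :
    ((s : ℂ) • (1 : Matrix (Fin K) (Fin K) ℂ) + B).det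
      = ((∏ i, (s + hB.eigenvalues i) : ℝ) : ℂ) := by
  classical
  set U : Matrix (Fin K) (Fin K) ℂ := (hB.eigenvectorUnitary : Matrix (Fin K) (Fin K) ℂ) with hUdef
  have hU1 : U * star U = 1 := Matrix.mem_unitaryGroup_iff.mp hB.eigenvectorUnitary.2
  have hdiagsum : Matrix.diagonal (fun i : Fin K => (s : ℂ) + (hB.eigenvalues i : ℂ))
      = (s : ℂ) • (1 : Matrix (Fin K) (Fin K) ℂ)
        + Matrix.diagonal (RCLike.ofReal ∘ hB.eigenvalues) := by
    rw [Matrix.smul_one_eq_diagonal, ← Matrix.diagonal_add]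
    rfl
  have key : (s : ℂ) • (1 : Matrix (Fin K) (Fin K) ℂ) + B
      = U * Matrix.diagonal (fun i : Fin K => (s : ℂ) + (hB.eigenvalues i : ℂ)) * star U := by
    rw [hdiagsum, Matrix.mul_add, Matrix.add_mul]
    congr 1
    · rw [Matrix.mul_smul, Matrix.mul_one, Matrix.smul_mul, hU1]
    · exact hB.spectral_theorem
  rw [key, Matrix.det_mul, Matrix.det_mul, Matrix.det_diagonal]
  have hdet1 : U.det * (star U).det = 1 := by
    rw [← Matrix.det_mul, hU1, Matrix.det_one]
  rw [show U.det * (∏ i, ((s : ℂ) + (hB.eigenvalues i : ℂ))) * (star U).det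
      = (∏ i, ((s : ℂ) + (hB.eigenvalues i : ℂ))) * (U.det * (star U).det) by ring]
  rw [hdet1, mul_one]
  push_cast
  rfl

/-- Real part of the trace of a Hermitian matrix is the sum of its eigenvalues. -/
lemma trace_re_eq {K : ℕ} {B : Matrix (Fin K) (Fin K) ℂ} (hB : B.IsHermitian) :
    (Matrix.trace B).re = ∑ i, hB.eigenvalues i := by
  classical
  have hU2 : star (hB.eigenvectorUnitary : Matrix (Fin K) (Fin K) ℂ)
      * (hB.eigenvectorUnitary : Matrix (Fin K) (Fin K) ℂ) = 1 :=
    Matrix.mem_unitaryGroup_iff'.mp hB.eigenvectorUnitary.2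
  have h : Matrix.trace B = ((∑ i, hB.eigenvalues i : ℝ) : ℂ) := by
    conv_lhs => rw [hB.spectral_theorem, Unitary.conjStarAlgAut_apply]
    rw [Matrix.trace_mul_cycle, hU2, Matrix.one_mul, Matrix.trace_diagonal]
    push_cast
    rfl
  rw [h, Complex.ofReal_re]

/-- Rate lower bound: for `A`, `C` PSD Hermitian with decreasingly ordered
eigenvalues and `σ² > 0`,
`det(σ²I + A + C)/det(σ²I + C) ≥ ∏ i (1 + λ_i(A)/(σ² + λ_i(C)))`. -/
theorem det_ratio_ge_prod (K : ℕ) (hK : 1 ≤ K) (s : ℝ) (hs : 0 < s)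
    (A C : Matrix (Fin K) (Fin K) ℂ)
    (hA : A.PosSemidef) (hC : C.PosSemidef)
    (lamA lamC : Fin K → ℝ)
    (hlamA : Antitone lamA) (hlamC : Antitone lamC)
    (hpermA : ∃ e : Equiv.Perm (Fin K), lamA = hA.isHermitian.eigenvalues ∘ e)
    (hpermC : ∃ e : Equiv.Perm (Fin K), lamC = hC.isHermitian.eigenvalues ∘ e) :
    ∏ i, (1 + lamA i / (s + lamC i)) ≤
      (((s : ℂ) • (1 : Matrix (Fin K) (Fin K) ℂ) + A + C).det).re /
        (((s : ℂ) • (1 : Matrix (Fin K) (Fin K) ℂ) + C).det).re := by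
  classical
  obtain ⟨eA, heA⟩ := hpermA
  obtain ⟨eC, heC⟩ := hpermC
  have hH : (A + C).PosSemidef := hA.add hC
  set eigsH : Fin K → ℝ := hH.isHermitian.eigenvalues with heigsH
  set σ : Equiv.Perm (Fin K) := Tuple.sort (fun i => - eigsH i) with hσdef
  set x : Fin K → ℝ := fun i => eigsH (σ i) with hx_def
  have hxanti : Antitone x := by
    have hm := Tuple.monotone_sort (fun i => - eigsH i)
    intro i j hij
    have h2 := hm hij
    simp only [Function.comp_apply] at h2
    simp only [hx_def]
    linarith
  have hx0 : ∀ i, 0 ≤ x i := fun i => hH.eigenvalues_nonneg _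
  have hlamA0 : ∀ i, 0 ≤ lamA i := fun i => by rw [heA]; exact hA.eigenvalues_nonneg _
  have hlamC0 : ∀ i, 0 ≤ lamC i := fun i => by rw [heC]; exact hC.eigenvalues_nonneg _
  set y : Fin K → ℝ := fun i => lamA i + lamC i with hy_def
  have hy0 : ∀ i, 0 ≤ y i := fun i => add_nonneg (hlamA0 i) (hlamC0 i)
  set W : Matrix (Fin K) (Fin K) ℂ := (hH.isHermitian.eigenvectorUnitary : Matrix (Fin K) (Fin K) ℂ) with hWdef
  have hWmem : W ∈ Matrix.unitaryGroup (Fin K) ℂ := hH.isHermitian.eigenvectorUnitary.2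
  have hdiagH : star W * (A + C) * W = Matrix.diagonal (RCLike.ofReal ∘ eigsH) :=
    by have := hH.isHermitian.conjStarAlgAut_star_eigenvectorUnitary
       rw [Unitary.conjStarAlgAut_apply, Unitary.coe_star, star_star] at this
       exact this
  -- partial sums
  have hpart : ∀ k, k ≤ K → ∑ i ∈ Fk K k, x i ≤ ∑ i ∈ Fk K k, y i := by
    intro k hk
    have hL : ∑ i ∈ Fk K k, x i
        = ∑ j ∈ (Fk K k).image σ, ((star W * (A + C) * W) j j).re := by
      rw [Finset.sum_image (fun a _ b _ h => σ.injective h)]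
      apply Finset.sum_congr rfl
      intro i _
      rw [hdiagH]
      simp [hx_def]
    have hsplit : ∀ j, ((star W * (A + C) * W) j j).re
        = ((star W * A * W) j j).re + ((star W * C * W) j j).re := by
      intro j
      have hmm : star W * (A + C) * W = star W * A * W + star W * C * W := by
        rw [Matrix.mul_add, Matrix.add_mul]
      rw [hmm]
      simp [Matrix.add_apply]
    have hcard : ((Fk K k).image σ).card = k := by
      rw [Finset.card_image_of_injective _ σ.injective, card_Fk hk]
    have hKA := kyfan hA lamA hlamA eA heA W hWmem ((Fk K k).image σ)
    have hKC := kyfan hC lamC hlamC eC heC W hWmem ((Fk K k).image σ)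
    rw [hcard] at hKA hKC
    calc ∑ i ∈ Fk K k, x i
        = ∑ j ∈ (Fk K k).image σ, ((star W * (A + C) * W) j j).re := hL
      _ = ∑ j ∈ (Fk K k).image σ, ((star W * A * W) j j).re
          + ∑ j ∈ (Fk K k).image σ, ((star W * C * W) j j).re := by
          rw [← Finset.sum_add_distrib]
          exact Finset.sum_congr rfl fun j _ => hsplit j
      _ ≤ ∑ i ∈ Fk K k, lamA i + ∑ i ∈ Fk K k, lamC i := add_le_add hKA hKC
      _ = ∑ i ∈ Fk K k, y i := by rw [← Finset.sum_add_distrib]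
  -- total sums agree (traces)
  have htot : ∑ i, x i = ∑ i, y i := by
    have h1 : ∑ i, x i = ∑ i, eigsH i := Equiv.sum_comp σ eigsH
    have h2 : ∑ i, lamA i = ∑ i, hA.isHermitian.eigenvalues i := by
      rw [heA]; exact Equiv.sum_comp eA _
    have h3 : ∑ i, lamC i = ∑ i, hC.isHermitian.eigenvalues i := by
      rw [heC]; exact Equiv.sum_comp eC _
    have htr : (Matrix.trace (A + C)).re = (Matrix.trace A).re + (Matrix.trace C).re := by
      rw [Matrix.trace_add]; simp
    have h4 := trace_re_eq hH.isHermitian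
    have h5 := trace_re_eq hA.isHermitian
    have h6 := trace_re_eq hC.isHermitian
    have hysum : ∑ i, y i = ∑ i, lamA i + ∑ i, lamC i := Finset.sum_add_distrib
    rw [h1, hysum, h2, h3, ← h4, ← h5, ← h6, htr]
  have hkar := karamata_prod s hs x y hxanti hx0 hy0 hpart htot
  -- determinants
  have hdetH : (((s : ℂ) • (1 : Matrix (Fin K) (Fin K) ℂ) + A + C).det).re
      = ∏ i, (s + x i) := by
    have hassoc : (s : ℂ) • (1 : Matrix (Fin K) (Fin K) ℂ) + A + C
        = (s : ℂ) • (1 : Matrix (Fin K) (Fin K) ℂ) + (A + C) := by rw [add_assoc]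
    rw [hassoc, det_shift hH.isHermitian s, Complex.ofReal_re]
    exact (Equiv.prod_comp σ (fun j => s + eigsH j)).symm
  have hdetC : (((s : ℂ) • (1 : Matrix (Fin K) (Fin K) ℂ) + C).det).re
      = ∏ i, (s + lamC i) := by
    rw [det_shift hC.isHermitian s, Complex.ofReal_re]
    rw [show (fun i => s + lamC i) = fun i => s + hC.isHermitian.eigenvalues (eC i) by
      funext i; rw [heC]; rfl]
    exact (Equiv.prod_comp eC (fun j => s + hC.isHermitian.eigenvalues j)).symm
  have hQpos : 0 < ∏ i, (s + lamC i) :=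
    Finset.prod_pos fun i _ => by linarith [hlamC0 i]
  rw [hdetH, hdetC, le_div_iff₀ hQpos, ← Finset.prod_mul_distrib]
  have hfac : ∀ i, (1 + lamA i / (s + lamC i)) * (s + lamC i) = s + y i := by
    intro i
    have hne : s + lamC i ≠ 0 := ne_of_gt (by linarith [hlamC0 i])
    field_simp
    ring
  rw [Finset.prod_congr rfl fun i _ => hfac i]
  exact hkar
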